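/- Let Y, W be pointed metric spaces and T : Y → W Lipschitz with T(0)=0. Then T is MS-strongly Lipschitz p-summing if and only if the Lipschitz adjoint T^# : W^# → Y^# is p*-summing. -/

import Mathlib

open scoped TensorProduct
open NormedSpace Finset

noncomputable section

/-- The strong `ℓ_p^m` norm of a finite family in a normed space. -/
def strongLp {E : Type*} [NormedAddCommGroup E] (p : ℝ) {m : ℕ} (x : Fin m → E) : ℝ :=
  (∑ j, ‖x j‖ ^ p) ^ (1 / p)

/-- The weak `ℓ_p^{m,w}` norm of a finite family in a normed space. -/
def weakLp {E : Type*} [NormedAddCommGroup E] [NormedSpace ℝ E] (p : ℝ) {m : ℕ}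
    (x : Fin m → E) : ℝ :=
  sSup {r : ℝ | ∃ φ : StrongDual ℝ E, ‖φ‖ ≤ 1 ∧ r = (∑ j, |φ (x j)| ^ p) ^ (1 / p)}

/-- A continuous linear operator is `p`-summing. -/
def IsPSumming {E F : Type*} [NormedAddCommGroup E] [NormedSpace ℝ E]
    [NormedAddCommGroup F] [NormedSpace ℝ F] (p : ℝ) (u : E →L[ℝ] F) : Prop :=
  ∃ K > 0, ∀ (m : ℕ) (x : Fin m → E),
    strongLp p (fun j => u (x j)) ≤ K * weakLp p x

/-- A continuous linear operator is (Cohen) strongly `p`-summing (`q` is the conjugate of `p`). -/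
def IsStronglyPSumming {E F : Type*} [NormedAddCommGroup E] [NormedSpace ℝ E]
    [NormedAddCommGroup F] [NormedSpace ℝ F] (p q : ℝ) (u : E →L[ℝ] F) : Prop :=
  ∃ K > 0, ∀ (m : ℕ) (x : Fin m → E) (φ : Fin m → StrongDual ℝ F),
    ∑ j, |φ j (u (x j))| ≤ K * strongLp p x * weakLp q φ

/-- A continuous linear operator is (Cohen) `p`-nuclear (`q` is the conjugate of `p`). -/
def IsPNuclear {E F : Type*} [NormedAddCommGroup E] [NormedSpace ℝ E]
    [NormedAddCommGroup F] [NormedSpace ℝ F] (p q : ℝ) (u : E →L[ℝ] F) : Prop :=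
  ∃ K > 0, ∀ (m : ℕ) (x : Fin m → E) (φ : Fin m → StrongDual ℝ F),
    ∑ j, |φ j (u (x j))| ≤ K * weakLp p x * weakLp q φ

/-- The Chevet–Saphar norm `d_p` on a tensor product (`q` is the conjugate of `p`):
infimum over all finite representations of `z`. -/
def dpNorm {E G : Type*} [NormedAddCommGroup E] [NormedSpace ℝ E]
    [NormedAddCommGroup G] [NormedSpace ℝ G] (p q : ℝ) (z : TensorProduct ℝ E G) : ℝ :=
  sInf {r : ℝ | ∃ (m : ℕ) (n : Fin m → E) (h : Fin m → G),
    z = ∑ j, n j ⊗ₜ[ℝ] h j ∧ r = weakLp p n * strongLp q h}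

/-- The Chevet–Saphar norm `g_p` on a tensor product (`q` is the conjugate of `p`). -/
def gpNorm {E G : Type*} [NormedAddCommGroup E] [NormedSpace ℝ E]
    [NormedAddCommGroup G] [NormedSpace ℝ G] (p q : ℝ) (z : TensorProduct ℝ E G) : ℝ :=
  sInf {r : ℝ | ∃ (m : ℕ) (n : Fin m → E) (h : Fin m → G),
    z = ∑ j, n j ⊗ₜ[ℝ] h j ∧ r = strongLp p n * weakLp q h}

/-- The tensor norm `w_p` (`q` is the conjugate of `p`). -/
def wpNorm {E G : Type*} [NormedAddCommGroup E] [NormedSpace ℝ E]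
    [NormedAddCommGroup G] [NormedSpace ℝ G] (p q : ℝ) (z : TensorProduct ℝ E G) : ℝ :=
  sInf {r : ℝ | ∃ (m : ℕ) (n : Fin m → E) (h : Fin m → G),
    z = ∑ j, n j ⊗ₜ[ℝ] h j ∧ r = weakLp p n * weakLp q h}

/-- `E`, together with the map `δ : Y → E`, is (isometrically) the Lipschitz-free space
of the pointed metric space `(Y, y₀)`: `δ` sends the base point to `0`, is an isometric
embedding, has dense linear span, and the norm of finite combinations of point evaluations
is computed against the unit ball of `Lip₀(Y)`. -/
structure IsFreeSpace (Y : Type*) [MetricSpace Y] (y₀ : Y)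
    (E : Type*) [NormedAddCommGroup E] [NormedSpace ℝ E] [CompleteSpace E]
    (δ : Y → E) : Prop where
  map_base : δ y₀ = 0
  isometry : ∀ x y : Y, ‖δ x - δ y‖ = dist x y
  dense_span : (Submodule.span ℝ (Set.range δ)).topologicalClosure = ⊤
  norm_eq : ∀ (n : ℕ) (a : Fin n → ℝ) (x : Fin n → Y),
    ‖∑ i, a i • δ (x i)‖ =
      sSup {r : ℝ | ∃ s : Y → ℝ, LipschitzWith 1 s ∧ s y₀ = 0 ∧ r = |∑ i, a i * s (x i)|}

end

noncomputable section

variable {Y W FY FW : Type*} [MetricSpace Y] [MetricSpace W]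
  [NormedAddCommGroup FY] [NormedSpace ℝ FY] [NormedAddCommGroup FW] [NormedSpace ℝ FW]

/-- `T : Y → W` is MS-Lipschitz `p`-summing (`q` is the conjugate of `p`), the free spaces
of `Y` and `W` being realized as `FY`, `FW` via `δY`, `δW`.  Elements of `W^# = F(W)^*` are
encoded as elements of `Dual ℝ FW`, and `d_p^L` is the Chevet–Saphar norm computed in
`F(Y) ⊗ W^#`. -/
def MSLipPSumming (p q : ℝ) (δY : Y → FY) (δW : W → FW) (T : Y → W) : Prop :=
  ∃ K > 0, ∀ (k : ℕ) (x y : Fin k → Y) (f : Fin k → StrongDual ℝ FW),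
    |∑ l, (f l (δW (T (x l))) - f l (δW (T (y l))))| ≤
      K * dpNorm p q (∑ l, (δY (x l) - δY (y l)) ⊗ₜ[ℝ] f l)

/-- `T : Y → W` is MS-strongly Lipschitz `p`-summing (`q` is the conjugate of `p`). -/
def MSStronglyLipPSumming (p q : ℝ) (δY : Y → FY) (δW : W → FW) (T : Y → W) : Prop :=
  ∃ K > 0, ∀ (k : ℕ) (x y : Fin k → Y) (f : Fin k → StrongDual ℝ FW),
    |∑ l, (f l (δW (T (x l))) - f l (δW (T (y l))))| ≤
      K * gpNorm p q (∑ l, (δY (x l) - δY (y l)) ⊗ₜ[ℝ] f l)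

/-- `T : Y → W` is MS-Lipschitz `p`-nuclear (`q` is the conjugate of `p`). -/
def MSLipPNuclear (p q : ℝ) (δY : Y → FY) (δW : W → FW) (T : Y → W) : Prop :=
  ∃ K > 0, ∀ (k : ℕ) (x y : Fin k → Y) (f : Fin k → StrongDual ℝ FW),
    |∑ l, (f l (δW (T (x l))) - f l (δW (T (y l))))| ≤
      K * wpNorm p q (∑ l, (δY (x l) - δY (y l)) ⊗ₜ[ℝ] f l)

end

noncomputable section AuxLemmas
set_option linter.unusedSectionVars false

open Finset

variable {E G : Type*} [NormedAddCommGroup E] [NormedSpace ℝ E]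
  [NormedAddCommGroup G] [NormedSpace ℝ G]

lemma strongLp_nonneg (p : ℝ) {m : ℕ} (x : Fin m → E) : 0 ≤ strongLp p x :=
  Real.rpow_nonneg (Finset.sum_nonneg fun _ _ => Real.rpow_nonneg (norm_nonneg _) _) _

lemma weakLp_bddAbove {p : ℝ} (hp : 0 ≤ p) {m : ℕ} (x : Fin m → E) :
    BddAbove {r : ℝ | ∃ φ : StrongDual ℝ E, ‖φ‖ ≤ 1 ∧ r = (∑ j, |φ (x j)| ^ p) ^ (1 / p)} := by
  refine ⟨strongLp p x, ?_⟩
  rintro r ⟨φ, hφ, rfl⟩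
  refine Real.rpow_le_rpow (Finset.sum_nonneg fun _ _ => Real.rpow_nonneg (abs_nonneg _) _)
    (Finset.sum_le_sum fun j _ => Real.rpow_le_rpow (abs_nonneg _) ?_ hp)
    (one_div_nonneg.mpr hp)
  calc |φ (x j)| = ‖φ (x j)‖ := (Real.norm_eq_abs _).symm
    _ ≤ ‖φ‖ * ‖x j‖ := φ.le_opNorm _
    _ ≤ 1 * ‖x j‖ := by gcongr
    _ = ‖x j‖ := one_mul _

lemma weakLp_nonneg {p : ℝ} (hp : 0 < p) {m : ℕ} (x : Fin m → E) : 0 ≤ weakLp p x := by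
  refine le_csSup (weakLp_bddAbove hp.le x) ⟨0, by simp, ?_⟩
  simp [Real.zero_rpow hp.ne', Real.zero_rpow (inv_ne_zero hp.ne'), one_div]

lemma le_weakLp {p : ℝ} (hp : 0 < p) {m : ℕ} (x : Fin m → E) (φ : StrongDual ℝ E) (hφ : ‖φ‖ ≤ 1) :
    (∑ j, |φ (x j)| ^ p) ^ (1 / p) ≤ weakLp p x :=
  le_csSup (weakLp_bddAbove hp.le x) ⟨φ, hφ, rfl⟩

lemma gpNorm_bddBelow (p : ℝ) {q : ℝ} (hq : 0 < q) (z : TensorProduct ℝ E G) :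
    BddBelow {r : ℝ | ∃ (m : ℕ) (n : Fin m → E) (h : Fin m → G),
      z = ∑ j, n j ⊗ₜ[ℝ] h j ∧ r = strongLp p n * weakLp q h} := by
  refine ⟨0, ?_⟩
  rintro r ⟨m, n, h, hz, rfl⟩
  exact mul_nonneg (strongLp_nonneg _ _) (weakLp_nonneg hq _)

lemma gpNorm_le (p : ℝ) {q : ℝ} (hq : 0 < q) {z : TensorProduct ℝ E G} {m : ℕ}
    {n : Fin m → E} {h : Fin m → G} (hz : z = ∑ j, n j ⊗ₜ[ℝ] h j) :
    gpNorm p q z ≤ strongLp p n * weakLp q h :=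
  csInf_le (gpNorm_bddBelow p hq z) ⟨m, n, h, hz, rfl⟩

/-- evaluation pairing `FY ⊗ W^# → ℝ`, `μ ⊗ f ↦ (Ts f) μ`. -/
def tensorEval {FY FW : Type*} [NormedAddCommGroup FY] [NormedSpace ℝ FY]
    [NormedAddCommGroup FW] [NormedSpace ℝ FW] (Ts : StrongDual ℝ FW →L[ℝ] StrongDual ℝ FY) :
    TensorProduct ℝ FY (StrongDual ℝ FW) →ₗ[ℝ] ℝ :=
  TensorProduct.lift
    { toFun := fun μ =>
        { toFun := fun f => Ts f μ
          map_add' := fun f g => by simp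
          map_smul' := fun c f => by simp }
      map_add' := fun μ ν => by ext f; simp
      map_smul' := fun c μ => by ext f; simp }

@[simp] lemma tensorEval_tmul {FY FW : Type*} [NormedAddCommGroup FY] [NormedSpace ℝ FY]
    [NormedAddCommGroup FW] [NormedSpace ℝ FW] (Ts : StrongDual ℝ FW →L[ℝ] StrongDual ℝ FY)
    (μ : FY) (f : StrongDual ℝ FW) : tensorEval Ts (μ ⊗ₜ[ℝ] f) = Ts f μ := rfl

/-- Bridge: the MS strong summing inequality extends from molecules to all elements of the
span of `δY`. -/
lemma bridge_lemma
    {Y W FY FW : Type*} [MetricSpace Y] [Inhabited Y] [MetricSpace W] [Inhabited W]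
    [NormedAddCommGroup FY] [NormedSpace ℝ FY]
    [NormedAddCommGroup FW] [NormedSpace ℝ FW]
    {δY : Y → FY} {δW : W → FW}
    (hFY0 : δY default = 0) (hFW0 : δW default = 0)
    {p q : ℝ}
    {T : Y → W} (hT0 : T default = default)
    (Ts : StrongDual ℝ FW →L[ℝ] StrongDual ℝ FY)
    (hTs : ∀ (f : StrongDual ℝ FW) (x : Y), Ts f (δY x) = f (δW (T x)))
    {K : ℝ}
    (hK : ∀ (k : ℕ) (x y : Fin k → Y) (f : Fin k → StrongDual ℝ FW),
      |∑ l, (f l (δW (T (x l))) - f l (δW (T (y l))))| ≤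
        K * gpNorm p q (∑ l, (δY (x l) - δY (y l)) ⊗ₜ[ℝ] f l))
    (k : ℕ) (μ : Fin k → FY) (f : Fin k → StrongDual ℝ FW)
    (hμ : ∀ l, μ l ∈ Submodule.span ℝ (Set.range δY)) :
    |∑ l, Ts (f l) (μ l)| ≤ K * gpNorm p q (∑ l, μ l ⊗ₜ[ℝ] f l) := by
  classical
  have hrep : ∀ l, ∃ (n : ℕ) (a : Fin n → ℝ) (v : Fin n → Y),
      μ l = ∑ i, a i • δY (v i) := by
    intro l
    obtain ⟨n, a, g, hg⟩ := Submodule.mem_span_set'.1 (hμ l)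
    choose v hv using fun i => (g i).2
    exact ⟨n, a, v, by
      rw [← hg]
      exact (Finset.sum_congr rfl fun i _ => by rw [hv i]).symm⟩
  choose n a v hv using hrep
  set ι := (l : Fin k) × Fin (n l) with hι
  set N := Fintype.card ι with hN
  set e : ι ≃ Fin N := Fintype.equivFin ι with he
  set X : Fin N → Y := fun i => v (e.symm i).1 (e.symm i).2 with hX
  set Yd : Fin N → Y := fun _ => default with hYd
  set F : Fin N → StrongDual ℝ FW := fun i => a (e.symm i).1 (e.symm i).2 • f (e.symm i).1 with hF
  have h0 : δW (T default) = 0 := by rw [hT0, hFW0]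
  have key := hK N X Yd F
  have hL : ∑ i, (F i (δW (T (X i))) - F i (δW (T (Yd i)))) = ∑ l, Ts (f l) (μ l) := by
    have h1 : ∀ i : Fin N, F i (δW (T (X i))) - F i (δW (T (Yd i)))
        = (fun j : ι => a j.1 j.2 * Ts (f j.1) (δY (v j.1 j.2))) (e.symm i) := by
      intro i
      simp only [hF, hX, hYd, h0, ContinuousLinearMap.smul_apply, smul_eq_mul, map_zero,
        mul_zero, sub_zero, hTs]
    rw [Finset.sum_congr rfl fun i _ => h1 i,
      Equiv.sum_comp e.symm (fun j : ι => a j.1 j.2 * Ts (f j.1) (δY (v j.1 j.2))),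
      ← Finset.univ_sigma_univ, Finset.sum_sigma]
    refine Finset.sum_congr rfl fun l _ => ?_
    rw [hv l, map_sum]
    exact Finset.sum_congr rfl fun i _ => by rw [map_smul, smul_eq_mul]
  have hZ : ∑ i, (δY (X i) - δY (Yd i)) ⊗ₜ[ℝ] F i = ∑ l, μ l ⊗ₜ[ℝ] f l := by
    have h1 : ∀ i : Fin N, (δY (X i) - δY (Yd i)) ⊗ₜ[ℝ] F i
        = (fun j : ι => a j.1 j.2 • (δY (v j.1 j.2) ⊗ₜ[ℝ] f j.1)) (e.symm i) := by
      intro i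
      simp only [hF, hX, hYd, hFY0, sub_zero, TensorProduct.tmul_smul]
    rw [Finset.sum_congr rfl fun i _ => h1 i,
      Equiv.sum_comp e.symm (fun j : ι => a j.1 j.2 • (δY (v j.1 j.2) ⊗ₜ[ℝ] f j.1)),
      ← Finset.univ_sigma_univ, Finset.sum_sigma]
    refine Finset.sum_congr rfl fun l _ => ?_
    rw [hv l, TensorProduct.sum_tmul]
    exact Finset.sum_congr rfl fun i _ => by rw [TensorProduct.smul_tmul, TensorProduct.tmul_smul]
  rw [hL, hZ] at key
  exact key

end AuxLemmas
set_option maxHeartbeats 2000000 in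
/-- Corollary 3.3: `T` is MS-strongly Lipschitz `p`-summing iff the
Lipschitz adjoint `T^# : W^# → Y^#` (realized as the adjoint `Ts` of the linearization)
is `p*`-summing. -/
theorem msStronglyLipPSumming_iff_adjoint_pSumming
    {Y W FY FW : Type*} [MetricSpace Y] [Inhabited Y] [MetricSpace W] [Inhabited W]
    [NormedAddCommGroup FY] [NormedSpace ℝ FY] [CompleteSpace FY]
    [NormedAddCommGroup FW] [NormedSpace ℝ FW] [CompleteSpace FW]
    {δY : Y → FY} {δW : W → FW}
    (hFY : IsFreeSpace Y default FY δY) (hFW : IsFreeSpace W default FW δW)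
    {p q : ℝ} (hpq : p.HolderConjugate q)
    (T : Y → W) (hTlip : ∃ K, LipschitzWith K T) (hT0 : T default = default)
    (Ts : StrongDual ℝ FW →L[ℝ] StrongDual ℝ FY)
    (hTs : ∀ (f : StrongDual ℝ FW) (x : Y), Ts f (δY x) = f (δW (T x))) :
    MSStronglyLipPSumming p q δY δW T ↔ IsPSumming q Ts := by
  have hp0 : 0 < p := hpq.pos
  have hq0 : 0 < q := hpq.symm.pos
  constructor
  · -- MS strongly Lipschitz p-summing → Ts is q-summing
    rintro ⟨K, hK0, hK⟩
    refine ⟨K, hK0, fun m x => ?_⟩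
    have hW0 : 0 ≤ weakLp q x := weakLp_nonneg hq0 x
    refine le_of_forall_pos_le_add fun ε hε => ?_
    have hMq : (0:ℝ) ≤ (m : ℝ) ^ (1/q : ℝ) := Real.rpow_nonneg (Nat.cast_nonneg m) _
    set δ : ℝ := ε / ((m : ℝ) ^ (1/q : ℝ) + 1) with hδdef
    have hδ : 0 < δ := div_pos hε (by positivity)
    have hdense : Dense ((Submodule.span ℝ (Set.range δY) : Submodule ℝ FY) : Set FY) :=
      Submodule.dense_iff_topologicalClosure_eq_top.2 hFY.dense_span
    have hex : ∀ j : Fin m, ∃ μ : FY, μ ∈ Submodule.span ℝ (Set.range δY) ∧ ‖μ‖ ≤ 1 ∧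
        ‖Ts (x j)‖ - δ ≤ Ts (x j) μ := by
      intro j
      set g := Ts (x j) with hg
      by_cases hs : ‖g‖ ≤ δ
      · exact ⟨0, Submodule.zero_mem _, by simp, by rw [map_zero]; linarith⟩
      push_neg at hs
      have hgpos : 0 < ‖g‖ := lt_trans hδ hs
      obtain ⟨μ₀, hμ₀, hval⟩ :=
        g.exists_lt_apply_of_lt_opNorm (show ‖g‖ - δ/2 < ‖g‖ by linarith)
      set μ₁ : FY := if 0 ≤ g μ₀ then μ₀ else -μ₀ with hμ₁def
      have hμ₁norm : ‖μ₁‖ ≤ 1 := by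
        rw [hμ₁def]
        split_ifs
        · exact hμ₀.le
        · rw [norm_neg]; exact hμ₀.le
      have hμ₁val : ‖g‖ - δ/2 < g μ₁ := by
        rw [hμ₁def]; split_ifs with h
        · rwa [Real.norm_eq_abs, abs_of_nonneg h] at hval
        · rw [map_neg]
          rw [Real.norm_eq_abs, abs_of_neg (lt_of_not_ge h)] at hval
          linarith
      set δ₂ : ℝ := δ / (4 * (‖g‖ + 1)) with hδ₂def
      have hδ₂ : 0 < δ₂ := by positivity
      obtain ⟨ν, hνmem, hνdist⟩ := hdense.exists_dist_lt μ₁ hδ₂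
      have hdist : ‖μ₁ - ν‖ ≤ δ₂ := by
        rw [← dist_eq_norm]; exact hνdist.le
      have habs : |g μ₁ - g ν| ≤ ‖g‖ * δ₂ := by
        have h1 : ‖g (μ₁ - ν)‖ ≤ ‖g‖ * ‖μ₁ - ν‖ := g.le_opNorm _
        rw [map_sub, Real.norm_eq_abs] at h1
        exact h1.trans (mul_le_mul_of_nonneg_left hdist (norm_nonneg g))
      have hgν : g μ₁ - ‖g‖ * δ₂ ≤ g ν := by
        have := (abs_le.1 habs).2; linarith
      have hνnorm : ‖ν‖ ≤ 1 + δ₂ := by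
        have h1 : ‖ν‖ ≤ ‖μ₁‖ + ‖μ₁ - ν‖ := by
          calc ‖ν‖ = ‖μ₁ - (μ₁ - ν)‖ := by congr 1; abel
            _ ≤ ‖μ₁‖ + ‖μ₁ - ν‖ := norm_sub_le _ _
        linarith
      refine ⟨(1 + δ₂)⁻¹ • ν, Submodule.smul_mem _ _ hνmem, ?_, ?_⟩
      · rw [norm_smul, Real.norm_eq_abs, abs_of_nonneg (by positivity)]
        rw [inv_mul_le_iff₀ (by positivity)]
        simpa using hνnorm
      · rw [map_smul, smul_eq_mul]
        have key2 : (1 + δ₂) * (‖g‖ - δ) ≤ g ν := by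
          have e1 : δ₂ * (4 * (‖g‖ + 1)) = δ := by
            rw [hδ₂def]; field_simp
          nlinarith [mul_nonneg hδ.le hδ₂.le, mul_nonneg hgpos.le hδ₂.le]
        calc ‖g‖ - δ = (1 + δ₂)⁻¹ * ((1 + δ₂) * (‖g‖ - δ)) := by
              field_simp
          _ ≤ (1 + δ₂)⁻¹ * g ν := by
              exact mul_le_mul_of_nonneg_left key2 (by positivity)
    choose μ hmem hnorm hval using hex
    set t : Fin m → ℝ := fun j => max (‖Ts (x j)‖ - δ) 0 with ht
    have ht0 : ∀ j, 0 ≤ t j := fun j => le_max_right _ _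
    set c : Fin m → ℝ := fun j => t j ^ (q - 1) with hc
    have hc0 : ∀ j, 0 ≤ c j := fun j => Real.rpow_nonneg (ht0 j) _
    set A : ℝ := ∑ j, t j ^ q with hA
    have hA0 : 0 ≤ A := Finset.sum_nonneg fun j _ => Real.rpow_nonneg (ht0 j) _
    have hq1 : 0 < q - 1 := sub_pos.2 hpq.symm.lt
    -- Step 1 : A ≤ ∑ c j * Ts (x j) (μ j)
    have step1 : A ≤ ∑ j, c j * Ts (x j) (μ j) := by
      refine Finset.sum_le_sum fun j _ => ?_
      rcases eq_or_lt_of_le (ht0 j) with h0 | hpos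
      · rw [hc]
        simp only [← h0, Real.zero_rpow hq0.ne', Real.zero_rpow (ne_of_gt hq1), zero_mul]
        exact le_refl 0
      · have htj : t j = ‖Ts (x j)‖ - δ := by
          rcases max_cases (‖Ts (x j)‖ - δ) 0 with ⟨h1, _⟩ | ⟨h1, _⟩
          · exact h1
          · exfalso; rw [ht] at hpos; simp only at hpos; rw [h1] at hpos; exact lt_irrefl 0 hpos
        have h1 : t j ^ q = c j * t j := by
          rw [hc]
          have h2 : t j ^ q = t j ^ (q - 1) * t j ^ (1:ℝ) := by
            rw [← Real.rpow_add hpos]; norm_num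
          rw [h2, Real.rpow_one]
        rw [h1]
        refine mul_le_mul_of_nonneg_left ?_ (hc0 j)
        rw [htj]
        exact hval j
    -- Step 2 : apply the bridge lemma
    have step2 := bridge_lemma hFY.map_base hFW.map_base hT0 Ts hTs hK m μ
      (fun j => c j • x j) hmem
    have hsum_eq : ∑ j, Ts (c j • x j) (μ j) = ∑ j, c j * Ts (x j) (μ j) :=
      Finset.sum_congr rfl fun j _ => by
        rw [map_smul, ContinuousLinearMap.smul_apply, smul_eq_mul]
    have step3 : ∑ j, c j * Ts (x j) (μ j)
        ≤ K * gpNorm p q (∑ j, μ j ⊗ₜ[ℝ] (c j • x j)) := by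
      rw [← hsum_eq]
      exact (le_abs_self _).trans step2
    have hrep2 : (∑ j, μ j ⊗ₜ[ℝ] (c j • x j)) = ∑ j, (c j • μ j) ⊗ₜ[ℝ] x j :=
      Finset.sum_congr rfl fun j _ => by
        rw [TensorProduct.tmul_smul, TensorProduct.smul_tmul']
    have step4 : gpNorm p q (∑ j, μ j ⊗ₜ[ℝ] (c j • x j))
        ≤ strongLp p (fun j => c j • μ j) * weakLp q x := gpNorm_le p hq0 hrep2
    have step5 : strongLp p (fun j => c j • μ j) ≤ A ^ (1/p : ℝ) := by
      rw [strongLp, hA]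
      refine Real.rpow_le_rpow
        (Finset.sum_nonneg fun j _ => Real.rpow_nonneg (norm_nonneg _) _)
        (Finset.sum_le_sum fun j _ => ?_) (one_div_nonneg.2 hp0.le)
      have h1 : ‖c j • μ j‖ ≤ c j := by
        rw [norm_smul, Real.norm_eq_abs, abs_of_nonneg (hc0 j)]
        calc c j * ‖μ j‖ ≤ c j * 1 := mul_le_mul_of_nonneg_left (hnorm j) (hc0 j)
          _ = c j := mul_one _
      calc ‖c j • μ j‖ ^ p ≤ c j ^ p := Real.rpow_le_rpow (norm_nonneg _) h1 hp0.le
        _ = t j ^ q := by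
            rw [hc]
            rw [← Real.rpow_mul (ht0 j), hpq.symm.sub_one_mul_conj]
    have step6 : A ≤ K * (A ^ (1/p : ℝ) * weakLp q x) := by
      refine step1.trans (step3.trans ?_)
      calc K * gpNorm p q (∑ j, μ j ⊗ₜ[ℝ] (c j • x j))
          ≤ K * (strongLp p (fun j => c j • μ j) * weakLp q x) :=
            mul_le_mul_of_nonneg_left step4 hK0.le
        _ ≤ K * (A ^ (1/p : ℝ) * weakLp q x) :=
            mul_le_mul_of_nonneg_left (mul_le_mul_of_nonneg_right step5 hW0) hK0.le
    have hAq : A ^ (1/q : ℝ) ≤ K * weakLp q x := by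
      rcases eq_or_lt_of_le hA0 with h0 | hApos
      · rw [← h0, Real.zero_rpow (one_div_ne_zero hq0.ne')]
        positivity
      · have hppow : 0 < A ^ (1/p : ℝ) := Real.rpow_pos_of_pos hApos _
        have hsum : A ^ (1/q : ℝ) * A ^ (1/p : ℝ) = A := by
          rw [← Real.rpow_add hApos]
          have hco : 1/q + 1/p = 1 := by
            rw [one_div, one_div, add_comm]; exact hpq.inv_add_inv_eq_one
          rw [hco, Real.rpow_one]
        have h2 : A ^ (1/q : ℝ) = A / A ^ (1/p : ℝ) := by
          rw [eq_div_iff hppow.ne']; exact hsum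
        rw [h2, div_le_iff₀ hppow]
        calc A ≤ K * (A ^ (1/p:ℝ) * weakLp q x) := step6
          _ = K * weakLp q x * A ^ (1/p:ℝ) := by ring
    have hfinal : strongLp q (fun j => Ts (x j)) ≤ A ^ (1/q:ℝ) + δ * (m:ℝ) ^ (1/q:ℝ) := by
      have h1 : strongLp q (fun j => Ts (x j)) ≤ (∑ j, |t j + δ| ^ q) ^ (1/q : ℝ) := by
        rw [strongLp]
        refine Real.rpow_le_rpow
          (Finset.sum_nonneg fun j _ => Real.rpow_nonneg (norm_nonneg _) _)
          (Finset.sum_le_sum fun j _ => Real.rpow_le_rpow (norm_nonneg _) ?_ hq0.le)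
          (one_div_nonneg.2 hq0.le)
        have hmax : ‖Ts (x j)‖ - δ ≤ t j := by
          simp only [ht]; exact le_max_left _ _
        have habs2 : t j + δ ≤ |t j + δ| := le_abs_self _
        linarith
      have h3 := Real.Lp_add_le Finset.univ t (fun _ => δ) hpq.symm.lt.le
      have h4 : (∑ _j : Fin m, |δ| ^ q) ^ (1/q:ℝ) = δ * (m:ℝ) ^ (1/q:ℝ) := by
        rw [abs_of_nonneg hδ.le, Finset.sum_const, Finset.card_univ, Fintype.card_fin,
          nsmul_eq_mul, Real.mul_rpow (Nat.cast_nonneg m) (Real.rpow_nonneg hδ.le q),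
          ← Real.rpow_mul hδ.le, mul_one_div_cancel hq0.ne', Real.rpow_one, mul_comm]
      have h5 : (∑ j, |t j| ^ q) ^ (1/q:ℝ) = A ^ (1/q:ℝ) := by
        rw [hA]; congr 1
        exact Finset.sum_congr rfl fun j _ => by rw [abs_of_nonneg (ht0 j)]
      calc strongLp q (fun j => Ts (x j)) ≤ (∑ j, |t j + δ| ^ q) ^ (1/q:ℝ) := h1
        _ ≤ (∑ j, |t j| ^ q) ^ (1/q:ℝ) + (∑ _j : Fin m, |δ| ^ q) ^ (1/q:ℝ) := h3
        _ = A ^ (1/q:ℝ) + δ * (m:ℝ) ^ (1/q:ℝ) := by rw [h4, h5]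
    have hδm : δ * (m:ℝ) ^ (1/q:ℝ) ≤ ε := by
      rw [hδdef, div_mul_eq_mul_div, div_le_iff₀ (by positivity)]
      nlinarith [hMq, hε.le]
    calc strongLp q (fun j => Ts (x j)) ≤ A ^ (1/q:ℝ) + δ * (m:ℝ) ^ (1/q:ℝ) := hfinal
      _ ≤ K * weakLp q x + ε := add_le_add hAq hδm
  · -- Ts is q-summing → MS strongly Lipschitz p-summing
    rintro ⟨K, hK0, hK⟩
    refine ⟨K, hK0, fun k x y f => ?_⟩
    have hΦ : ∀ (m : ℕ) (nn : Fin m → FY) (hh : Fin m → StrongDual ℝ FW),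
        tensorEval Ts (∑ j, nn j ⊗ₜ[ℝ] hh j) = ∑ j, Ts (hh j) (nn j) := by
      intro m nn hh; rw [map_sum]; simp
    have hLHS : ∑ l, (f l (δW (T (x l))) - f l (δW (T (y l))))
        = tensorEval Ts (∑ l, (δY (x l) - δY (y l)) ⊗ₜ[ℝ] f l) := by
      rw [map_sum]
      refine Finset.sum_congr rfl fun l _ => ?_
      rw [tensorEval_tmul, map_sub, hTs, hTs]
    rw [hLHS]
    set z := ∑ l, (δY (x l) - δY (y l)) ⊗ₜ[ℝ] f l with hzdef
    have hne : {r : ℝ | ∃ (m : ℕ) (nn : Fin m → FY) (hh : Fin m → StrongDual ℝ FW),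
        z = ∑ j, nn j ⊗ₜ[ℝ] hh j ∧ r = strongLp p nn * weakLp q hh}.Nonempty :=
      ⟨_, k, fun l => δY (x l) - δY (y l), f, rfl, rfl⟩
    have hbound : ∀ r ∈ {r : ℝ | ∃ (m : ℕ) (nn : Fin m → FY) (hh : Fin m → StrongDual ℝ FW),
        z = ∑ j, nn j ⊗ₜ[ℝ] hh j ∧ r = strongLp p nn * weakLp q hh},
        |tensorEval Ts z| / K ≤ r := by
      rintro r ⟨m, nn, hh, hzr, rfl⟩
      rw [div_le_iff₀ hK0, hzr, hΦ]
      calc |∑ j, Ts (hh j) (nn j)|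
          ≤ ∑ j, |Ts (hh j) (nn j)| := Finset.abs_sum_le_sum_abs _ _
        _ ≤ ∑ j, ‖nn j‖ * ‖Ts (hh j)‖ := by
            refine Finset.sum_le_sum fun j _ => ?_
            calc |Ts (hh j) (nn j)| = ‖Ts (hh j) (nn j)‖ := (Real.norm_eq_abs _).symm
              _ ≤ ‖Ts (hh j)‖ * ‖nn j‖ := (Ts (hh j)).le_opNorm _
              _ = ‖nn j‖ * ‖Ts (hh j)‖ := mul_comm _ _
        _ ≤ (∑ j, |‖nn j‖| ^ p) ^ (1 / p) * (∑ j, |‖Ts (hh j)‖| ^ q) ^ (1 / q) :=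
            Real.inner_le_Lp_mul_Lq Finset.univ _ _ hpq
        _ = strongLp p nn * strongLp q (fun j => Ts (hh j)) := by
            rw [strongLp, strongLp]
            congr 1 <;> refine congrArg (· ^ _) (Finset.sum_congr rfl fun j _ => ?_) <;>
              rw [abs_of_nonneg (norm_nonneg _)]
        _ ≤ strongLp p nn * (K * weakLp q hh) :=
            mul_le_mul_of_nonneg_left (hK m hh) (strongLp_nonneg _ _)
        _ = strongLp p nn * weakLp q hh * K := by ring
    have hfin : |tensorEval Ts z| / K ≤ gpNorm p q z := le_csInf hne hbound
    rw [div_le_iff₀ hK0] at hfin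
    calc |tensorEval Ts z| ≤ gpNorm p q z * K := hfin
      _ = K * gpNorm p q z := mul_comm _ _
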